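/- Let a, b ∈ SL(2,ℂ) with tr(a) = tr(b) = t, and suppose a·b = d(λ) where d(λ) is the diagonal matrix diag(λ, λ⁻¹), with λ + λ⁻¹ ≠ t² - 2 and λ ≠ ±1. Then there exists μ ≠ 0 such that a = h(μ) and b = h(-λ⁻¹μ), where h(μ) is the matrix (1/(λ+1))·[[λt, μ], [δλ/μ, t]] with δ = t² - λ - λ⁻¹ - 2. -/

import Mathlib

open Matrix

noncomputable def hMat (t l μ : ℂ) : Matrix (Fin 2) (Fin 2) ℂ :=
  (l + 1)⁻¹ • !![l * t, μ; (t ^ 2 - l - l⁻¹ - 2) * l * μ⁻¹, t]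

theorem product_diagonal_form (a b : Matrix (Fin 2) (Fin 2) ℂ) (t l : ℂ)
    (ha : a.det = 1) (hb : b.det = 1) (hta : a.trace = t) (htb : b.trace = t)
    (hl1 : l ≠ 1) (hl2 : l ≠ -1) (hl3 : l + l⁻¹ ≠ t ^ 2 - 2)
    (hab : a * b = !![l, 0; 0, l⁻¹]) :
    ∃ μ : ℂ, μ ≠ 0 ∧ a = hMat t l μ ∧ b = hMat t l (-l⁻¹ * μ) := by
  have hl1' : l + 1 ≠ 0 := fun h => hl2 (by linear_combination h)
  have hl1'' : l - 1 ≠ 0 := sub_ne_zero.mpr hl1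
  have hdetd : (!![l, 0; 0, l⁻¹] : Matrix (Fin 2) (Fin 2) ℂ).det = 1 := by
    rw [← hab, Matrix.det_mul, ha, hb]; ring
  have hl0 : l ≠ 0 := by
    intro h
    simp [Matrix.det_fin_two_of, h] at hdetd
  obtain ⟨p, q, r, s, haeq⟩ : ∃ p q r s : ℂ, a = !![p, q; r, s] :=
    ⟨a 0 0, a 0 1, a 1 0, a 1 1, Matrix.eta_fin_two a⟩
  subst haeq
  rw [Matrix.det_fin_two_of] at ha
  rw [Matrix.trace_fin_two_of] at hta
  have hainv : (!![p, q; r, s] : Matrix (Fin 2) (Fin 2) ℂ)⁻¹ = !![s, -q; -r, p] := by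
    apply Matrix.inv_eq_left_inv
    rw [Matrix.mul_fin_two, Matrix.one_fin_two]
    ext i j
    fin_cases i <;> fin_cases j <;> simp <;> first | linear_combination ha | ring
  have hb_eq : b = !![s * l, -q * l⁻¹; -r * l, p * l⁻¹] := by
    have h1 : b = (!![p, q; r, s] : Matrix (Fin 2) (Fin 2) ℂ)⁻¹ * !![l, 0; 0, l⁻¹] := by
      rw [← hab, ← Matrix.mul_assoc,
        Matrix.nonsing_inv_mul (!![p, q; r, s] : Matrix (Fin 2) (Fin 2) ℂ)
          (by rw [Matrix.det_fin_two_of, ha]; exact isUnit_one),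
        Matrix.one_mul]
    rw [h1, hainv, Matrix.mul_fin_two]
    congr 1 <;> ring_nf
  have htrb : s * l + p * l⁻¹ = t := by
    rw [hb_eq, Matrix.trace_fin_two_of] at htb; exact htb
  have htrb' : s * l ^ 2 + p = t * l := by
    field_simp at htrb; linear_combination htrb
  have hs : s * (l + 1) = t := by
    have key : s * (l + 1) * (l - 1) = t * (l - 1) := by linear_combination htrb' - hta
    exact mul_right_cancel₀ hl1'' key
  have hp : p * (l + 1) = t * l := by linear_combination (l + 1) * hta - hs
  have hq : q ≠ 0 := by
    intro hq0
    apply hl3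
    have hps : p * s = 1 := by linear_combination ha + r * hq0
    have h2 : t ^ 2 * l = (l + 1) ^ 2 := by
      linear_combination (-(s * (l + 1))) * hp + (-(t * l)) * hs + (l + 1) ^ 2 * hps
    field_simp
    linear_combination -h2
  have hqr : q * r * (l + 1) ^ 2 = t ^ 2 * l - (l + 1) ^ 2 := by
    linear_combination (s * (l + 1)) * hp + (t * l) * hs - (l + 1) ^ 2 * ha
  refine ⟨(l + 1) * q, mul_ne_zero hl1' hq, ?_, ?_⟩
  · ext i j
    fin_cases i <;> fin_cases j <;> simp [hMat] <;> field_simp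
    · linear_combination hp
    · linear_combination hqr
    · exact hs
  · rw [hb_eq]
    ext i j
    fin_cases i <;> fin_cases j <;> simp [hMat] <;> field_simp
    · linear_combination hs
    · linear_combination hqr
    · linear_combination hp
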